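/- Let u, v : (0,1) → (0,∞) be continuous functions such that |u(t) - v(t)| < M for some constant M and all t ∈ (0,1), and u(t) < μ(t) < v(t) for all t ∈ (0,1). Then for every r ∈ (0,1), both 2^(-n)·u(L(r,-n)) and 2^(-n)·v(L(r,-n)) converge to μ(r) as n → ∞, where L(r,-n) denotes the descending Landen sequence of r. -/

import Mathlib

open MeasureTheory Set Filter

/-- Descending Landen sequence: `descL r p = L(r,-p)`. -/
noncomputable def descL (r : ℝ) : ℕ → ℝ
  | 0 => r
  | p + 1 => (descL r p / (1 + Real.sqrt (1 - (descL r p) ^ 2))) ^ 2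

/-- Ascending Landen sequence: `ascL r p = L(r,p)`. -/
noncomputable def ascL (r : ℝ) : ℕ → ℝ
  | 0 => r
  | p + 1 => 2 * Real.sqrt (ascL r p) / (1 + ascL r p)

/-- Complete elliptic integral of the first kind. -/
noncomputable def ellK (r : ℝ) : ℝ :=
  ∫ x in (0:ℝ)..1, 1 / Real.sqrt ((1 - x ^ 2) * (1 - r ^ 2 * x ^ 2))

/-- The Grötzsch modulus function `μ`. -/
noncomputable def mu (r : ℝ) : ℝ :=
  Real.pi / 2 * ellK (Real.sqrt (1 - r ^ 2)) / ellK r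

namespace LandenAux

noncomputable def phi (k x : ℝ) : ℝ := (1 + k) * x / (1 + k * x ^ 2)

noncomputable def phi' (k x : ℝ) : ℝ := (1 + k) * (1 - k * x ^ 2) / (1 + k * x ^ 2) ^ 2

lemma denom_pos {k : ℝ} (hk : 0 < k) (x : ℝ) : 0 < 1 + k * x ^ 2 := by positivity

lemma hasDerivAt_phi {k : ℝ} (hk : 0 < k) (x : ℝ) :
    HasDerivAt (phi k) (phi' k x) x := by
  have hd : (1 + k * x ^ 2) ≠ 0 := (denom_pos hk x).ne'
  have h1 : HasDerivAt (fun x : ℝ => (1 + k) * x) (1 + k) x := by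
    simpa using (hasDerivAt_id x).const_mul (1 + k)
  have h2 : HasDerivAt (fun x : ℝ => 1 + k * x ^ 2) (k * (2 * x)) x := by
    have := ((hasDerivAt_pow 2 x).const_mul k).const_add 1
    simpa [mul_comm, mul_assoc] using this
  have := h1.div h2 hd
  have e : phi' k x = ((1 + k) * (1 + k * x ^ 2) - (1 + k) * x * (k * (2 * x))) / (1 + k * x ^ 2) ^ 2 := by
    unfold phi'
    field_simp
    ring
  rw [e]; exact this

lemma injOn_phi {k : ℝ} (hk : k ∈ Set.Ioo (0:ℝ) 1) : InjOn (phi k) (Ioo 0 1) := by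
  intro x hx y hy hxy
  have hdx : (1 + k * x ^ 2) ≠ 0 := (denom_pos hk.1 x).ne'
  have hdy : (1 + k * y ^ 2) ≠ 0 := (denom_pos hk.1 y).ne'
  have hk1 : (1 : ℝ) + k ≠ 0 := by linarith [hk.1]
  unfold phi at hxy
  rw [div_eq_div_iff hdx hdy] at hxy
  have h : (x - y) * ((1 + k) * (1 - k * x * y)) = 0 := by ring_nf; nlinarith [hxy]
  have hxy0 : x * y < 1 := by nlinarith [mul_pos hx.1 (sub_pos.2 hy.2), hx.2, hy.2]
  have hxy1 : k * x * y < 1 := by nlinarith [mul_pos hx.1 hy.1, hk.2, hxy0]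
  have : (1 + k) * (1 - k * x * y) ≠ 0 := by
    apply ne_of_gt
    apply mul_pos (by linarith [hk.1])
    linarith [hxy1]
  have := mul_eq_zero.1 h
  rcases this with h' | h'
  · linarith
  · exact absurd h' this

lemma image_phi {k : ℝ} (hk : k ∈ Set.Ioo (0:ℝ) 1) : phi k '' Ioo 0 1 = Ioo 0 1 := by
  apply Subset.antisymm
  · rintro _ ⟨x, hx, rfl⟩
    constructor
    · unfold phi
      exact div_pos (mul_pos (by linarith [hk.1]) hx.1) (denom_pos hk.1 x)
    · unfold phi
      rw [div_lt_one (denom_pos hk.1 x)]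
      have hkx : k * x < 1 := by nlinarith [mul_pos (sub_pos.2 hk.2) hx.1, hx.2]
      nlinarith [mul_pos (sub_pos.2 hx.2) (sub_pos.2 hkx)]
  · have hcont : ContinuousOn (phi k) (Icc 0 1) := by
      apply ContinuousOn.div
      · fun_prop
      · fun_prop
      · intro x _; exact (denom_pos hk.1 x).ne'
    have h0 : phi k 0 = 0 := by unfold phi; simp
    have h1 : phi k 1 = 1 := by
      unfold phi; rw [one_pow, mul_one, mul_one, div_self]; linarith [hk.1]
    have := intermediate_value_Ioo (le_of_lt one_pos) hcont
    rw [h0, h1] at this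
    exact this

lemma landen {k : ℝ} (hk : k ∈ Set.Ioo (0:ℝ) 1) :
    ellK (2 * Real.sqrt k / (1 + k)) = (1 + k) * ellK k := by
  have hk0 := hk.1
  have hk1 := hk.2
  have hk1' : (0:ℝ) < 1 + k := by linarith
  set k1 : ℝ := 2 * Real.sqrt k / (1 + k) with hk1def
  have hk1sq : k1 ^ 2 = 4 * k / (1 + k) ^ 2 := by
    rw [hk1def, div_pow, mul_pow, Real.sq_sqrt hk0.le]; ring_nf
  have hIoo : MeasurableSet (Ioo (0:ℝ) 1) := measurableSet_Ioo
  have hderiv : ∀ x ∈ Ioo (0:ℝ) 1,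
      HasDerivWithinAt (phi k) (phi' k x) (Ioo 0 1) x :=
    fun x _ => (hasDerivAt_phi hk0 x).hasDerivWithinAt
  have hchg := integral_image_eq_integral_abs_deriv_smul hIoo hderiv (injOn_phi hk)
      (fun y => 1 / Real.sqrt ((1 - y ^ 2) * (1 - k1 ^ 2 * y ^ 2)))
  rw [image_phi hk] at hchg
  have hpt : ∀ x ∈ Ioo (0:ℝ) 1,
      |phi' k x| • (1 / Real.sqrt ((1 - (phi k x) ^ 2) * (1 - k1 ^ 2 * (phi k x) ^ 2)))
        = (1 + k) * (1 / Real.sqrt ((1 - x ^ 2) * (1 - k ^ 2 * x ^ 2))) := by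
    intro x hx
    have hx0 := hx.1
    have hx1 := hx.2
    have hA : (0:ℝ) < 1 - x ^ 2 := by nlinarith
    have hB : (0:ℝ) < 1 - k ^ 2 * x ^ 2 := by nlinarith
    have hC : (0:ℝ) < 1 - k * x ^ 2 := by nlinarith
    have hD : (0:ℝ) < 1 + k * x ^ 2 := denom_pos hk0 x
    have harg : (1 - (phi k x) ^ 2) * (1 - k1 ^ 2 * (phi k x) ^ 2)
        = ((1 - x ^ 2) * (1 - k ^ 2 * x ^ 2)) * ((1 - k * x ^ 2) / (1 + k * x ^ 2) ^ 2) ^ 2 := by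
      unfold phi
      rw [hk1sq]
      field_simp
      ring
    have hsq : Real.sqrt ((1 - (phi k x) ^ 2) * (1 - k1 ^ 2 * (phi k x) ^ 2))
        = Real.sqrt ((1 - x ^ 2) * (1 - k ^ 2 * x ^ 2)) * ((1 - k * x ^ 2) / (1 + k * x ^ 2) ^ 2) := by
      rw [harg, Real.sqrt_mul (by positivity), Real.sqrt_sq (by positivity)]
    have habs : |phi' k x| = (1 + k) * (1 - k * x ^ 2) / (1 + k * x ^ 2) ^ 2 := by
      unfold phi'
      rw [abs_of_pos]
      positivity
    rw [hsq, habs, smul_eq_mul]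
    have hS : (0:ℝ) < Real.sqrt ((1 - x ^ 2) * (1 - k ^ 2 * x ^ 2)) :=
      Real.sqrt_pos.2 (by positivity)
    field_simp
  have hellK1 : ellK k1 = ∫ x in Ioo (0:ℝ) 1,
      1 / Real.sqrt ((1 - x ^ 2) * (1 - k1 ^ 2 * x ^ 2)) := by
    rw [ellK, intervalIntegral.integral_of_le one_pos.le, integral_Ioc_eq_integral_Ioo]
  have hellK : ellK k = ∫ x in Ioo (0:ℝ) 1,
      1 / Real.sqrt ((1 - x ^ 2) * (1 - k ^ 2 * x ^ 2)) := by
    rw [ellK, intervalIntegral.integral_of_le one_pos.le, integral_Ioc_eq_integral_Ioo]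
  rw [hellK1, hchg, setIntegral_congr_fun hIoo hpt, hellK, integral_const_mul]

lemma step_mem {t : ℝ} (ht : t ∈ Set.Ioo (0:ℝ) 1) :
    (t / (1 + Real.sqrt (1 - t ^ 2))) ^ 2 ∈ Set.Ioo (0:ℝ) 1 := by
  have h0 := ht.1
  have h1 := ht.2
  have hs : (0:ℝ) ≤ Real.sqrt (1 - t ^ 2) := Real.sqrt_nonneg _
  have hd : (0:ℝ) < 1 + Real.sqrt (1 - t ^ 2) := by linarith
  have hlt : t / (1 + Real.sqrt (1 - t ^ 2)) < 1 := by
    rw [div_lt_one hd]; linarith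
  have hpos : 0 < t / (1 + Real.sqrt (1 - t ^ 2)) := div_pos h0 hd
  exact ⟨by positivity, by nlinarith⟩

lemma mu_step {t : ℝ} (ht : t ∈ Set.Ioo (0:ℝ) 1) :
    mu ((t / (1 + Real.sqrt (1 - t ^ 2))) ^ 2) = 2 * mu t := by
  have h0 := ht.1
  have h1 := ht.2
  set t' : ℝ := Real.sqrt (1 - t ^ 2) with ht'def
  have ht2 : (0:ℝ) < 1 - t ^ 2 := by nlinarith
  have ht'sq : t' ^ 2 = 1 - t ^ 2 := Real.sq_sqrt ht2.le
  have ht'0 : 0 < t' := Real.sqrt_pos.2 ht2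
  have ht'1 : t' < 1 := by nlinarith [ht'sq, ht'0, h0, sq_nonneg (t' - 1)]
  have hd : (0:ℝ) < 1 + t' := by linarith
  set s : ℝ := (t / (1 + t')) ^ 2 with hsdef
  have hs_eq : s = (1 - t') / (1 + t') := by
    rw [hsdef, div_pow, div_eq_div_iff (by positivity) hd.ne']
    nlinarith [ht'sq]
  have hs_mem : s ∈ Set.Ioo (0:ℝ) 1 := step_mem ht
  have hsqrt_s : Real.sqrt s = t / (1 + t') := by
    rw [hsdef, Real.sqrt_sq (by positivity)]
  have h1s : 1 + s = 2 / (1 + t') := by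
    rw [hs_eq]
    field_simp
    ring
  have hcomp : Real.sqrt (1 - s ^ 2) = 2 * Real.sqrt t' / (1 + t') := by
    have : 1 - s ^ 2 = (2 * Real.sqrt t' / (1 + t')) ^ 2 := by
      rw [hs_eq]
      have h4 : (2 * Real.sqrt t' / (1 + t')) ^ 2 = 4 * t' / (1 + t') ^ 2 := by
        rw [div_pow, mul_pow, Real.sq_sqrt ht'0.le]; ring_nf
      rw [h4]
      field_simp
      ring
    rw [this, Real.sqrt_sq (by positivity)]
  have hland1 : ellK (2 * Real.sqrt t' / (1 + t')) = (1 + t') * ellK t' :=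
    landen ⟨ht'0, ht'1⟩
  have ht_eq : t = 2 * Real.sqrt s / (1 + s) := by
    rw [hsqrt_s, h1s]
    field_simp
  have hland2 : ellK t = (1 + s) * ellK s := by
    rw [ht_eq]; exact landen hs_mem
  have hmu_s : mu s = Real.pi / 2 * ((1 + t') * ellK t') / ellK s := by
    rw [mu, hcomp, hland1]
  have hmu_t : mu t = Real.pi / 2 * ellK t' / ((1 + s) * ellK s) := by
    rw [mu, ← ht'def, hland2]
  rw [hmu_s, hmu_t]
  have hkey : (1 + s) * (1 + t') = 2 := by
    rw [h1s]; field_simp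
  have h1s0 : (1:ℝ) + s ≠ 0 := ne_of_gt (by linarith [hs_mem.1])
  have hinv : 1 + t' = 2 * (1 + s)⁻¹ := by
    rw [eq_mul_inv_iff_mul_eq₀ h1s0]
    linarith [hkey]
  rw [hinv]
  simp only [div_eq_mul_inv, mul_inv]
  ring

end LandenAux

theorem tendsto_scaled_bounds_descL (u v : ℝ → ℝ) (M : ℝ)
    (hu_cont : ContinuousOn u (Set.Ioo (0:ℝ) 1))
    (hv_cont : ContinuousOn v (Set.Ioo (0:ℝ) 1))
    (hpos : ∀ t ∈ Set.Ioo (0:ℝ) 1, 0 < u t ∧ 0 < v t)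
    (hM : ∀ t ∈ Set.Ioo (0:ℝ) 1, |u t - v t| < M)
    (huv : ∀ t ∈ Set.Ioo (0:ℝ) 1, u t < mu t ∧ mu t < v t)
    (r : ℝ) (hr : r ∈ Set.Ioo (0:ℝ) 1) :
    Filter.Tendsto (fun n : ℕ => (2:ℝ) ^ (-(n:ℤ)) * u (descL r n))
        Filter.atTop (nhds (mu r)) ∧
      Filter.Tendsto (fun n : ℕ => (2:ℝ) ^ (-(n:ℤ)) * v (descL r n))
        Filter.atTop (nhds (mu r)) := by
  have hL : ∀ n, descL r n ∈ Set.Ioo (0:ℝ) 1 := by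
    intro n
    induction n with
    | zero => exact hr
    | succ n ih => exact LandenAux.step_mem ih
  have hmuL : ∀ n, mu (descL r n) = 2 ^ n * mu r := by
    intro n
    induction n with
    | zero => simp [descL]
    | succ n ih =>
      have hstep : mu (descL r (n + 1)) = 2 * mu (descL r n) := by
        show mu ((descL r n / (1 + Real.sqrt (1 - (descL r n) ^ 2))) ^ 2) = _
        exact LandenAux.mu_step (hL n)
      rw [hstep, ih, pow_succ]
      ring
  have key : ∀ w : ℝ → ℝ, (∀ t ∈ Set.Ioo (0:ℝ) 1, |w t - mu t| ≤ M) →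
      Filter.Tendsto (fun n : ℕ => (2:ℝ) ^ (-(n:ℤ)) * w (descL r n))
        Filter.atTop (nhds (mu r)) := by
    intro w hw
    have hbound : ∀ n : ℕ, ‖(2:ℝ) ^ (-(n:ℤ)) * w (descL r n) - mu r‖ ≤ (1/2:ℝ) ^ n * M := by
      intro n
      have h2n : (2:ℝ) ^ (-(n:ℤ)) = (1/2:ℝ) ^ n := by
        rw [zpow_neg, zpow_natCast, one_div, inv_pow]
      have hfac : (2:ℝ) ^ (-(n:ℤ)) * w (descL r n) - mu r
          = (1/2:ℝ) ^ n * (w (descL r n) - mu (descL r n)) := by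
        rw [hmuL n, h2n]
        have h12 : ((1:ℝ)/2) ^ n * (2:ℝ) ^ n = 1 := by
          rw [one_div, inv_pow, inv_mul_cancel₀ (by positivity)]
        linear_combination (mu r) * h12
      rw [hfac, norm_mul, norm_pow]
      have hn : ‖(1/2:ℝ)‖ = 1/2 := by norm_num
      rw [hn, Real.norm_eq_abs]
      exact mul_le_mul_of_nonneg_left (hw _ (hL n)) (by positivity)
    have hgeo : Filter.Tendsto (fun n : ℕ => (1/2:ℝ) ^ n * M) Filter.atTop (nhds 0) := by
      have := tendsto_pow_atTop_nhds_zero_of_lt_one (by norm_num : (0:ℝ) ≤ 1/2)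
        (by norm_num : (1/2:ℝ) < 1)
      simpa using this.mul_const M
    have := squeeze_zero_norm hbound hgeo
    have := this.add_const (mu r)
    simpa using this
  constructor
  · apply key u
    intro t ht
    have h1 := (huv t ht).1
    have h2 := (huv t ht).2
    have h3 := hM t ht
    rw [abs_sub_lt_iff] at h3
    rw [abs_le]
    constructor <;> nlinarith [h3.1, h3.2]
  · apply key v
    intro t ht
    have h1 := (huv t ht).1
    have h2 := (huv t ht).2
    have h3 := hM t ht
    rw [abs_sub_lt_iff] at h3
    rw [abs_le]
    constructor <;> nlinarith [h3.1, h3.2]
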